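/- Let Γ = ⟨S⟩ act on a probability space (X,ν) preserving the measure, with S finite symmetric containing 1, and suppose the action is ε-expanding in measure. Let g ≥ 0 be a nonnegative simple function g = Σ_{i=0}^n β_i 1_{B_i} with β_i > 0, nested sets B_{i+1} ⊆ B_i, and ν(B_i) ≤ 1/2 for all i. Then for 1 ≤ p < ∞ there exists s ∈ S with ‖s·g − g‖_p ≥ ((1 + ε/|S|)^{1/p} − 1)‖g‖_p. -/

import Mathlib

open MeasureTheory Pointwise
open scoped ENNReal Classical

section aux

variable {X : Type*}

lemma aux_lower_total {K L : Finset ℕ}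
    (hK : ∀ i j : ℕ, i ≤ j → j ∈ K → i ∈ K)
    (hL : ∀ i j : ℕ, i ≤ j → j ∈ L → i ∈ L) :
    K ⊆ L ∨ L ⊆ K := by
  by_contra h
  push_neg at h
  obtain ⟨hKL, hLK⟩ := h
  obtain ⟨a, haK, haL⟩ := Finset.not_subset.mp hKL
  obtain ⟨b, hbL, hbK⟩ := Finset.not_subset.mp hLK
  rcases le_total a b with hab | hba
  · exact haL (hL a b hab hbL)
  · exact hbK (hK b a hba haK)

lemma aux_filter_lower (m : ℕ) (C : ℕ → Set X)
    (hC : ∀ i j : ℕ, i ≤ j → C j ⊆ C i) (x : X) :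
    ∀ i j : ℕ, i ≤ j → j ∈ (Finset.range m).filter (fun k => x ∈ C k) →
      i ∈ (Finset.range m).filter (fun k => x ∈ C k) := by
  classical
  intro i j hij hj
  simp only [Finset.mem_filter, Finset.mem_range] at *
  exact ⟨lt_of_le_of_lt hij hj.1, hC i j hij hj.2⟩

lemma aux_sum_ind (m : ℕ) (c : ℕ → ℝ) (C : ℕ → Set X) (x : X) :
    ∑ j ∈ Finset.range m, c j * (C j).indicator (fun _ => (1:ℝ)) x
      = ∑ j ∈ (Finset.range m).filter (fun k => x ∈ C k), c j := by
  classical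
  rw [Finset.sum_filter]
  refine Finset.sum_congr rfl fun j _ => ?_
  by_cases h : x ∈ C j <;> simp [h]

lemma aux_nested_rpow (p : ℝ) (hp : p ≠ 0) (m : ℕ) (βn : ℕ → ℝ)
    (C : ℕ → Set X) (hC : ∀ i j : ℕ, i ≤ j → C j ⊆ C i) (x : X) :
    (∑ j ∈ Finset.range m, βn j * (C j).indicator (fun _ => (1:ℝ)) x) ^ p
      = ∑ j ∈ Finset.range m,
          ((∑ k ∈ Finset.range (j+1), βn k) ^ p - (∑ k ∈ Finset.range j, βn k) ^ p)
            * (C j).indicator (fun _ => (1:ℝ)) x := by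
  classical
  rw [aux_sum_ind, aux_sum_ind]
  set K := (Finset.range m).filter (fun k => x ∈ C k) with hKdef
  rcases K.eq_empty_or_nonempty with hK | hK
  · rw [hK]
    simp [Real.zero_rpow hp]
  · have hkK : K.max' hK ∈ K := K.max'_mem hK
    have hKeq : K = Finset.range (K.max' hK + 1) := by
      ext j
      simp only [Finset.mem_range, Nat.lt_succ_iff]
      constructor
      · intro hj; exact Finset.le_max' K j hj
      · intro hj
        exact aux_filter_lower (m := m) C hC x j (K.max' hK) hj hkK
    rw [hKeq, Finset.sum_range_sub (fun j => (∑ k ∈ Finset.range j, βn k) ^ p)]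
    simp [Real.zero_rpow hp]

lemma aux_le_union (m : ℕ) (βn : ℕ → ℝ) (hβ : ∀ j, 0 ≤ βn j)
    (C D : ℕ → Set X) (x : X) :
    ∑ j ∈ Finset.range m, βn j * (C j).indicator (fun _ => (1:ℝ)) x
      ≤ ∑ j ∈ Finset.range m, βn j * (C j ∪ D j).indicator (fun _ => (1:ℝ)) x := by
  classical
  rw [aux_sum_ind, aux_sum_ind]
  refine Finset.sum_le_sum_of_subset_of_nonneg ?_ (fun j _ _ => hβ j)
  intro j hj
  simp only [Finset.mem_filter, Finset.mem_range, Set.mem_union] at *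
  exact ⟨hj.1, Or.inl hj.2⟩

lemma aux_union_le_max (m : ℕ) (βn : ℕ → ℝ) (hβ : ∀ j, 0 ≤ βn j)
    (C D : ℕ → Set X)
    (hC : ∀ i j : ℕ, i ≤ j → C j ⊆ C i) (hD : ∀ i j : ℕ, i ≤ j → D j ⊆ D i) (x : X) :
    ∑ j ∈ Finset.range m, βn j * (C j ∪ D j).indicator (fun _ => (1:ℝ)) x
      ≤ max (∑ j ∈ Finset.range m, βn j * (C j).indicator (fun _ => (1:ℝ)) x)
          (∑ j ∈ Finset.range m, βn j * (D j).indicator (fun _ => (1:ℝ)) x) := by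
  classical
  rw [aux_sum_ind, aux_sum_ind, aux_sum_ind]
  rcases aux_lower_total
      (K := (Finset.range m).filter (fun k => x ∈ C k))
      (L := (Finset.range m).filter (fun k => x ∈ D k))
      (aux_filter_lower (m := m) C hC x) (aux_filter_lower (m := m) D hD x) with h | h
  · refine le_trans (Finset.sum_le_sum_of_subset_of_nonneg ?_ (fun j _ _ => hβ j))
      (le_max_right _ _)
    intro j hj
    simp only [Finset.mem_filter, Finset.mem_range, Set.mem_union] at *
    rcases hj.2 with hx | hx
    · have := h (Finset.mem_filter.mpr ⟨Finset.mem_range.mpr hj.1, hx⟩)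
      simpa using this
    · exact ⟨hj.1, hx⟩
  · refine le_trans (Finset.sum_le_sum_of_subset_of_nonneg ?_ (fun j _ _ => hβ j))
      (le_max_left _ _)
    intro j hj
    simp only [Finset.mem_filter, Finset.mem_range, Set.mem_union] at *
    rcases hj.2 with hx | hx
    · exact ⟨hj.1, hx⟩
    · have := h (Finset.mem_filter.mpr ⟨Finset.mem_range.mpr hj.1, hx⟩)
      simpa using this

end aux

set_option maxHeartbeats 1000000 in
/-- If the action of `Γ = ⟨S⟩` on a probability space is `ε`-expanding in measure and
`g = Σ β_i 1_{B_i}` is a nonnegative simple function with `β_i > 0`, nested sets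
`B_{i+1} ⊆ B_i` and `ν(B_i) ≤ 1/2`, then there exists `s ∈ S` with
`‖s·g − g‖_p ≥ ((1 + ε/|S|)^{1/p} − 1)‖g‖_p`. -/
theorem expanding_gives_gap_on_simple_functions
    {Γ X : Type*} [Group Γ] [MulAction Γ X] [MeasurableSpace X]
    (ν : Measure X) [IsProbabilityMeasure ν]
    (hmp : ∀ g : Γ, MeasurePreserving (fun x => g • x) ν ν)
    (S : Finset Γ) (hS1 : (1 : Γ) ∈ S) (hSsymm : ∀ s ∈ S, s⁻¹ ∈ S)
    (ε : ℝ) (hε : 0 < ε)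
    (hexp : ∀ A : Set X, MeasurableSet A → ν A ≤ 1 / 2 →
      ENNReal.ofReal (1 + ε) * ν A ≤ ν (⋃ s ∈ S, s • A))
    (p : ℝ) (hp : 1 ≤ p)
    (n : ℕ) (β : Fin (n + 1) → ℝ) (hβ : ∀ i, 0 < β i)
    (B : Fin (n + 1) → Set X) (hBmeas : ∀ i, MeasurableSet (B i))
    (hBnested : ∀ i j : Fin (n + 1), i ≤ j → B j ⊆ B i)
    (hBhalf : ∀ i, ν (B i) ≤ 1 / 2)
    (g : X → ℝ)
    (hg : g = fun x => ∑ i, β i * (B i).indicator (fun _ => (1 : ℝ)) x) :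
    ∃ s ∈ S,
      ENNReal.ofReal ((1 + ε / S.card) ^ (1 / p) - 1)
          * eLpNorm g (ENNReal.ofReal p) ν
        ≤ eLpNorm (fun x => g (s⁻¹ • x) - g x) (ENNReal.ofReal p) ν := by
  classical
  have hp0 : (0:ℝ) < p := lt_of_lt_of_le one_pos hp
  set q : ℝ≥0∞ := ENNReal.ofReal p with hq
  have hq0 : q ≠ 0 := by
    simp only [hq, ne_eq, ENNReal.ofReal_eq_zero, not_le]
    exact hp0
  have hqtop : q ≠ ⊤ := ENNReal.ofReal_ne_top
  have hqreal : q.toReal = p := ENNReal.toReal_ofReal hp0.le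
  -- ℕ-indexed data
  set βn : ℕ → ℝ := fun j => if h : j < n + 1 then β ⟨j, h⟩ else 0 with hβn
  set Bn : ℕ → Set X := fun j => if h : j < n + 1 then B ⟨j, h⟩ else ∅ with hBn
  have hβn0 : ∀ j, 0 ≤ βn j := by
    intro j
    simp only [hβn]
    split
    · exact (hβ _).le
    · exact le_refl 0
  have hBnmeas : ∀ j, MeasurableSet (Bn j) := by
    intro j
    simp only [hBn]
    split
    · exact hBmeas _
    · exact MeasurableSet.empty
  have hBnhalf : ∀ j, ν (Bn j) ≤ 1 / 2 := by
    intro j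
    simp only [hBn]
    split
    · exact hBhalf _
    · simp
  have hBnnested : ∀ i j : ℕ, i ≤ j → Bn j ⊆ Bn i := by
    intro i j hij
    by_cases hj : j < n + 1
    · have hi : i < n + 1 := lt_of_le_of_lt hij hj
      simp only [hBn, dif_pos hi, dif_pos hj]
      exact hBnested ⟨i, hi⟩ ⟨j, hj⟩ hij
    · simp only [hBn, dif_neg hj, Set.empty_subset]
  have hg' : g = fun x => ∑ j ∈ Finset.range (n+1),
      βn j * (Bn j).indicator (fun _ => (1:ℝ)) x := by
    rw [hg]; funext x
    rw [← Fin.sum_univ_eq_sum_range (fun j => βn j * (Bn j).indicator (fun _ => (1:ℝ)) x)]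
    refine Finset.sum_congr rfl fun i _ => ?_
    simp [hβn, hBn, i.isLt, Nat.le_of_lt_succ i.isLt]
  -- the "γ" coefficients
  set γ : ℕ → ℝ := fun j =>
    (∑ k ∈ Finset.range (j+1), βn k) ^ p - (∑ k ∈ Finset.range j, βn k) ^ p with hγ
  have hγ0 : ∀ j, 0 ≤ γ j := by
    intro j
    have h1 : (0:ℝ) ≤ ∑ k ∈ Finset.range j, βn k :=
      Finset.sum_nonneg fun k _ => hβn0 k
    have h2 : ∑ k ∈ Finset.range j, βn k ≤ ∑ k ∈ Finset.range (j+1), βn k := by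
      rw [Finset.sum_range_succ]
      linarith [hβn0 j]
    exact sub_nonneg.mpr (Real.rpow_le_rpow h1 h2 hp0.le)
  -- smul sets
  have hsmul_eq : ∀ (s : Γ) (A : Set X), s • A = (fun x => s⁻¹ • x) ⁻¹' A := by
    intro s A; ext x; simp [Set.mem_smul_set_iff_inv_smul_mem]
  have hsmeas : ∀ (s : Γ) (A : Set X), MeasurableSet A → MeasurableSet (s • A) := by
    intro s A hA; rw [hsmul_eq]; exact (hmp s⁻¹).measurable hA
  have hsmeasure : ∀ (s : Γ) (A : Set X), MeasurableSet A → ν (s • A) = ν A := by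
    intro s A hA; rw [hsmul_eq]
    exact (hmp s⁻¹).measure_preimage hA.nullMeasurableSet
  -- integral quantities
  set Jg : ℝ≥0∞ := ∑ j ∈ Finset.range (n+1), ENNReal.ofReal (γ j) * ν (Bn j) with hJg
  set Jh : Γ → ℝ≥0∞ := fun s =>
    ∑ j ∈ Finset.range (n+1), ENNReal.ofReal (γ j) * ν (Bn j ∪ s • Bn j) with hJh
  -- pointwise key identity in ℝ≥0∞
  have key : ∀ (C : ℕ → Set X), (∀ i j : ℕ, i ≤ j → C j ⊆ C i) → ∀ x : X,
      (‖∑ j ∈ Finset.range (n+1), βn j * (C j).indicator (fun _ => (1:ℝ)) x‖₊ : ℝ≥0∞) ^ p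
        = ∑ j ∈ Finset.range (n+1),
            (C j).indicator (fun _ => ENNReal.ofReal (γ j)) x := by
    intro C hC x
    have h0 : 0 ≤ ∑ j ∈ Finset.range (n+1), βn j * (C j).indicator (fun _ => (1:ℝ)) x :=
      Finset.sum_nonneg fun j _ => mul_nonneg (hβn0 j)
        (Set.indicator_nonneg (fun _ _ => zero_le_one) x)
    rw [← enorm_eq_nnnorm, Real.enorm_eq_ofReal h0, ENNReal.ofReal_rpow_of_nonneg h0 hp0.le,
      aux_nested_rpow p hp0.ne' (n+1) βn C hC x,
      ENNReal.ofReal_sum_of_nonneg (fun j _ => mul_nonneg (hγ0 j)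
        (Set.indicator_nonneg (fun _ _ => zero_le_one) x))]
    refine Finset.sum_congr rfl fun j _ => ?_
    by_cases hx : x ∈ C j <;> simp [hx]
  -- lintegral of sums of indicators
  have hlint : ∀ (C : ℕ → Set X), (∀ j, MeasurableSet (C j)) →
      ∫⁻ x, ∑ j ∈ Finset.range (n+1),
          (C j).indicator (fun _ => ENNReal.ofReal (γ j)) x ∂ν
        = ∑ j ∈ Finset.range (n+1), ENNReal.ofReal (γ j) * ν (C j) := by
    intro C hCm
    rw [lintegral_finset_sum _ (fun j _ => Measurable.indicator measurable_const (hCm j))]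
    exact Finset.sum_congr rfl fun j _ => lintegral_indicator_const (hCm j) _
  have hintg : ∫⁻ x, (‖g x‖₊ : ℝ≥0∞) ^ p ∂ν = Jg := by
    rw [hg']
    rw [lintegral_congr (key Bn hBnnested)]
    exact hlint Bn hBnmeas
  have hCsnested : ∀ s : Γ, ∀ i j : ℕ, i ≤ j → Bn j ∪ s • Bn j ⊆ Bn i ∪ s • Bn i := by
    intro s i j hij
    exact Set.union_subset_union (hBnnested i j hij) (Set.smul_set_mono (hBnnested i j hij))
  have hinth : ∀ s : Γ,
      ∫⁻ x, (‖∑ j ∈ Finset.range (n+1),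
          βn j * ((Bn j ∪ s • Bn j)).indicator (fun _ => (1:ℝ)) x‖₊ : ℝ≥0∞) ^ p ∂ν = Jh s := by
    intro s
    rw [lintegral_congr (key (fun j => Bn j ∪ s • Bn j) (hCsnested s))]
    exact hlint _ fun j => (hBnmeas j).union (hsmeas s _ (hBnmeas j))
  -- expansion inequality per level
  have hAexp : ∀ A : Set X, MeasurableSet A → ν A ≤ 1 / 2 →
      ENNReal.ofReal ((S.card : ℝ) + ε) * ν A ≤ ∑ s ∈ S, ν (A ∪ s • A) := by
    intro A hAm hA2
    set U := ⋃ s ∈ S, s • A with hU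
    have hAU : A ⊆ U := by
      intro x hx
      refine Set.mem_biUnion hS1 ?_
      simpa using hx
    have hνU : ν A + ν (U \ A) = ν U := by
      rw [measure_add_diff hAm.nullMeasurableSet U, Set.union_eq_self_of_subset_left hAU]
    have hsum1 : ∀ s ∈ S, ν (A ∪ s • A) = ν A + ν (s • A \ A) := by
      intro s _
      exact (measure_add_diff hAm.nullMeasurableSet (s • A)).symm
    have hsum2 : ν (U \ A) ≤ ∑ s ∈ S, ν (s • A \ A) := by
      have hUd : U \ A = ⋃ s ∈ S, (s • A \ A) := by
        ext x
        simp only [hU, Set.mem_diff, Set.mem_iUnion]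
        tauto
      rw [hUd]
      exact measure_biUnion_finset_le S _
    have hcard1 : (1:ℝ) ≤ S.card := by
      have : 0 < S.card := Finset.card_pos.mpr ⟨1, hS1⟩
      exact_mod_cast this
    calc ENNReal.ofReal ((S.card : ℝ) + ε) * ν A
        = ENNReal.ofReal ((S.card : ℝ) - 1) * ν A + ENNReal.ofReal (1 + ε) * ν A := by
          rw [← add_mul, ← ENNReal.ofReal_add (by linarith) (by linarith)]
          ring_nf
      _ ≤ ENNReal.ofReal ((S.card : ℝ) - 1) * ν A + ν U := by
          gcongr
          exact hexp A hAm hA2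
      _ = ENNReal.ofReal ((S.card : ℝ) - 1) * ν A + ν A + ν (U \ A) := by
          rw [← hνU, add_assoc]
      _ = (S.card : ℝ≥0∞) * ν A + ν (U \ A) := by
          congr 1
          rw [← ENNReal.ofReal_natCast S.card, ← one_mul (ν A), ← mul_assoc, mul_one,
            ← add_mul, ← ENNReal.ofReal_one, ← ENNReal.ofReal_add (by linarith) zero_le_one]
          norm_num
      _ ≤ (S.card : ℝ≥0∞) * ν A + ∑ s ∈ S, ν (s • A \ A) := by gcongr
      _ = ∑ s ∈ S, (ν A + ν (s • A \ A)) := by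
          rw [Finset.sum_add_distrib, Finset.sum_const, nsmul_eq_mul]
      _ = ∑ s ∈ S, ν (A ∪ s • A) := Finset.sum_congr rfl fun s hs => (hsum1 s hs).symm
  -- summing over levels
  have hsumJ : ENNReal.ofReal ((S.card : ℝ) + ε) * Jg ≤ ∑ s ∈ S, Jh s := by
    rw [hJg, Finset.mul_sum]
    have : ∑ s ∈ S, Jh s
        = ∑ j ∈ Finset.range (n+1), ENNReal.ofReal (γ j) * ∑ s ∈ S, ν (Bn j ∪ s • Bn j) := by
      rw [Finset.sum_comm (s := S)]
      exact Finset.sum_congr rfl fun j _ => (Finset.mul_sum _ _ _).symm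
    rw [this]
    refine Finset.sum_le_sum fun j _ => ?_
    calc ENNReal.ofReal ((S.card : ℝ) + ε) * (ENNReal.ofReal (γ j) * ν (Bn j))
        = ENNReal.ofReal (γ j) * (ENNReal.ofReal ((S.card : ℝ) + ε) * ν (Bn j)) := by ring
      _ ≤ ENNReal.ofReal (γ j) * ∑ s ∈ S, ν (Bn j ∪ s • Bn j) :=
          mul_le_mul_right (hAexp (Bn j) (hBnmeas j) (hBnhalf j)) _
  -- pigeonhole via max
  obtain ⟨s₀, hs₀S, hs₀max⟩ := S.exists_max_image Jh ⟨1, hS1⟩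
  have hScard0 : (S.card : ℝ≥0∞) ≠ 0 := by
    simp only [ne_eq, Nat.cast_eq_zero]
    exact (Finset.card_pos.mpr ⟨1, hS1⟩).ne'
  have hScardR : (0:ℝ) < S.card := by exact_mod_cast Finset.card_pos.mpr ⟨1, hS1⟩
  have hmain : ENNReal.ofReal (1 + ε / S.card) * Jg ≤ Jh s₀ := by
    rw [← ENNReal.mul_le_mul_iff_right hScard0 (ENNReal.natCast_ne_top S.card)]
    calc (S.card : ℝ≥0∞) * (ENNReal.ofReal (1 + ε / S.card) * Jg)
        = ENNReal.ofReal ((S.card : ℝ) * (1 + ε / S.card)) * Jg := by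
          rw [← ENNReal.ofReal_natCast S.card, ← mul_assoc,
            ← ENNReal.ofReal_mul (by positivity)]
      _ = ENNReal.ofReal ((S.card : ℝ) + ε) * Jg := by
          have hcc : (S.card : ℝ) * (1 + ε / S.card) = (S.card : ℝ) + ε := by
            field_simp
          rw [hcc]
      _ ≤ ∑ s ∈ S, Jh s := hsumJ
      _ ≤ ∑ _s ∈ S, Jh s₀ := Finset.sum_le_sum fun s hs => hs₀max s hs
      _ = (S.card : ℝ≥0∞) * Jh s₀ := by rw [Finset.sum_const, nsmul_eq_mul]
  refine ⟨s₀, hs₀S, ?_⟩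
  -- the majorant function
  set hf : X → ℝ := fun x => ∑ j ∈ Finset.range (n+1),
    βn j * ((Bn j ∪ s₀ • Bn j)).indicator (fun _ => (1:ℝ)) x with hhf
  have hgmeas : Measurable g := by
    rw [hg']
    exact Finset.measurable_sum _ fun j _ =>
      (measurable_const.indicator (hBnmeas j)).const_mul (βn j)
  have hfmeas : Measurable hf := by
    exact Finset.measurable_sum _ fun j _ =>
      (measurable_const.indicator ((hBnmeas j).union (hsmeas s₀ _ (hBnmeas j)))).const_mul (βn j)
  -- pointwise translate
  have htrans : ∀ x, g (s₀⁻¹ • x) = ∑ j ∈ Finset.range (n+1),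
      βn j * ((s₀ • Bn j)).indicator (fun _ => (1:ℝ)) x := by
    intro x
    rw [hg']
    refine Finset.sum_congr rfl fun j _ => ?_
    congr 1
    by_cases hx : x ∈ s₀ • Bn j
    · rw [Set.indicator_of_mem hx, Set.indicator_of_mem]
      exact Set.mem_smul_set_iff_inv_smul_mem.mp hx
    · rw [Set.indicator_of_notMem hx, Set.indicator_of_notMem]
      exact fun hmem => hx (Set.mem_smul_set_iff_inv_smul_mem.mpr hmem)
  have hsnested : ∀ i j : ℕ, i ≤ j → s₀ • Bn j ⊆ s₀ • Bn i :=
    fun i j hij => Set.smul_set_mono (hBnnested i j hij)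
  -- pointwise comparison
  have hptwise : ∀ x, ‖hf x - g x‖ ≤ ‖g (s₀⁻¹ • x) - g x‖ := by
    intro x
    have h1 : g x ≤ hf x := by
      rw [hg']
      exact aux_le_union (n+1) βn hβn0 Bn (fun j => s₀ • Bn j) x
    have h2 : hf x ≤ max (g x) (g (s₀⁻¹ • x)) := by
      rw [htrans x, hg']
      exact aux_union_le_max (n+1) βn hβn0 Bn (fun j => s₀ • Bn j) hBnnested hsnested x
    rw [Real.norm_eq_abs, Real.norm_eq_abs, abs_of_nonneg (by linarith)]
    rcases le_total (g (s₀⁻¹ • x)) (g x) with hle | hle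
    · have : hf x ≤ g x := le_trans h2 (max_le le_rfl hle)
      have : hf x - g x = 0 := le_antisymm (by linarith) (by linarith)
      rw [this]
      exact abs_nonneg _
    · have : hf x ≤ g (s₀⁻¹ • x) := le_trans h2 (max_le hle le_rfl)
      calc hf x - g x ≤ g (s₀⁻¹ • x) - g x := by linarith
        _ ≤ |g (s₀⁻¹ • x) - g x| := le_abs_self _
  -- eLpNorm computations
  have hNg : eLpNorm g q ν = Jg ^ (1/p) := by
    rw [eLpNorm_eq_lintegral_rpow_enorm_toReal hq0 hqtop, hqreal]
    simp only [enorm_eq_nnnorm]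
    rw [hintg]
  have hNh : eLpNorm hf q ν = (Jh s₀) ^ (1/p) := by
    rw [eLpNorm_eq_lintegral_rpow_enorm_toReal hq0 hqtop, hqreal]
    simp only [enorm_eq_nnnorm]
    rw [hhf]
    rw [hinth s₀]
  have hJgtop : Jg ≠ ⊤ := by
    rw [hJg]
    refine (ENNReal.sum_lt_top.mpr fun j _ => ?_).ne
    exact ENNReal.mul_lt_top ENNReal.ofReal_lt_top (measure_lt_top ν _)
  have hNgtop : eLpNorm g q ν ≠ ⊤ := by
    rw [hNg]
    exact ENNReal.rpow_ne_top_of_nonneg (by positivity) hJgtop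
  have hapos : (0:ℝ) < 1 + ε / S.card := by positivity
  -- lower bound for eLpNorm hf
  have hlow : ENNReal.ofReal ((1 + ε / S.card) ^ (1/p)) * eLpNorm g q ν
      ≤ eLpNorm hf q ν := by
    rw [hNg, hNh, ← ENNReal.ofReal_rpow_of_pos hapos,
      ← ENNReal.mul_rpow_of_nonneg _ _ (by positivity : (0:ℝ) ≤ 1/p)]
    exact ENNReal.rpow_le_rpow hmain (by positivity)
  -- triangle inequality
  have htri : eLpNorm hf q ν
      ≤ eLpNorm (fun x => hf x - g x) q ν + eLpNorm g q ν := by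
    have heq : hf = (fun x => hf x - g x) + g := by
      funext x
      simp only [Pi.add_apply]
      ring
    have h1q : (1:ℝ≥0∞) ≤ q := by rw [hq]; exact ENNReal.one_le_ofReal.mpr hp
    have ham : AEStronglyMeasurable (fun x => hf x - g x) ν :=
      (hfmeas.sub hgmeas).aestronglyMeasurable
    have hgm : AEStronglyMeasurable g ν := hgmeas.aestronglyMeasurable
    have h := eLpNorm_add_le ham hgm h1q
    rw [← heq] at h
    exact h
  have hmono : eLpNorm (fun x => hf x - g x) q ν
      ≤ eLpNorm (fun x => g (s₀⁻¹ • x) - g x) q ν := eLpNorm_mono hptwise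
  -- conclude
  have hchain : ENNReal.ofReal ((1 + ε / S.card) ^ (1/p)) * eLpNorm g q ν
      ≤ eLpNorm (fun x => g (s₀⁻¹ • x) - g x) q ν + eLpNorm g q ν :=
    le_trans hlow (le_trans htri (add_le_add_left hmono _))
  rw [ENNReal.ofReal_sub _ zero_le_one, ENNReal.ofReal_one,
    ENNReal.sub_mul (fun _ _ => hNgtop)]
  rw [tsub_le_iff_right]
  calc ENNReal.ofReal ((1 + ε / ↑S.card) ^ (1 / p)) * eLpNorm g q ν
      ≤ eLpNorm (fun x => g (s₀⁻¹ • x) - g x) q ν + eLpNorm g q ν := hchain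
    _ = eLpNorm (fun x => g (s₀⁻¹ • x) - g x) q ν + 1 * eLpNorm g q ν := by rw [one_mul]
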